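/- (Summability estimates for the two-step method.) Suppose f is bounded below by f_inf ∈ ℝ, g is Lipschitz with constant L > 0, and H is Lipschitz in operator norm with constant σ > 0. Fix γ, δ, ζ ∈ (0,1], θ > 0, η ∈ [1,∞), α ∈ (0, 2δζ/(Lη²)), and β ∈ (0, 3γ/(σθ)). Let sequences (x_k), (x̂_k), (d_k), (ŝ_k) in E (k ∈ ℕ, k ≥ 1) satisfy for every k: (i) if λ(x_k) ≥ 0 then d_k = 0, and otherwise ⟪d_k, H(x_k) d_k⟫ ≤ γ λ(x_k) ‖d_k‖², ⟪g(x_k), d_k⟫ ≤ 0, and ‖d_k‖ = θ|λ(x_k)|; (ii) x̂_k = x_k + β d_k; (iii) if g(x̂_k) = 0 then ŝ_k = 0, and otherwise −⟪g(x̂_k), ŝ_k⟫ ≥ δ ‖ŝ_k‖ ‖g(x̂_k)‖ and ζ ‖g(x̂_k)‖ ≤ ‖ŝ_k‖ ≤ η ‖g(x̂_k)‖; (iv) x_{k+1} = x̂_k + α ŝ_k. Then the series ∑_{k=1}^∞ |(λ(x_k))₋|³ and ∑_{k=1}^∞ ‖g(x̂_k)‖² both converge (are finite). -/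

import Mathlib

open scoped RealInnerProductSpace
open Filter

section Aux
open Set
variable {n : ℕ}
local notation "E" => EuclideanSpace ℝ (Fin n)

lemma line_hasDerivAt (x v : E) (t : ℝ) :
    HasDerivAt (fun t : ℝ => x + t • v) v t := by
  simpa using ((hasDerivAt_id t).smul_const v).const_add x

lemma f_line_hasDerivAt {f : E → ℝ} (hf : ContDiff ℝ 2 f) (x v : E) (t : ℝ) :
    HasDerivAt (fun t : ℝ => f (x + t • v)) ⟪gradient f (x + t • v), v⟫ t := by
  have hdiff : DifferentiableAt ℝ f (x + t • v) :=
    (hf.differentiable (by norm_num)).differentiableAt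
  have hg := hdiff.hasGradientAt.hasFDerivAt
  have := hg.comp_hasDerivAt t (line_hasDerivAt x v t)
  simpa [InnerProductSpace.toDual_apply_apply, Function.comp_def] using this

lemma g_line_hasDerivAt {f : E → ℝ}
    (H : E → E →L[ℝ] E) (hH : ∀ x, HasFDerivAt (gradient f) (H x) x)
    (x v : E) (t : ℝ) :
    HasDerivAt (fun t : ℝ => gradient f (x + t • v)) (H (x + t • v) v) t := by
  simpa [Function.comp_def] using (hH (x + t • v)).comp_hasDerivAt t (line_hasDerivAt x v t)

set_option maxHeartbeats 1000000 in
set_option synthInstance.maxHeartbeats 400000 in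
lemma quad_descent {f : E → ℝ} (hf : ContDiff ℝ 2 f) {L : ℝ}
    (hgLip : ∀ x y, ‖gradient f x - gradient f y‖ ≤ L * ‖x - y‖) (x v : E) :
    f (x + v) ≤ f x + ⟪gradient f x, v⟫ + L / 2 * ‖v‖ ^ 2 := by
  set F : ℝ → ℝ := fun t => f (x + t • v) - t * ⟪gradient f x, v⟫ with hF
  set B : ℝ → ℝ := fun t => f x + L * ‖v‖ ^ 2 / 2 * t ^ 2 with hB
  have hF' : ∀ t : ℝ, HasDerivAt F (⟪gradient f (x + t • v), v⟫ - ⟪gradient f x, v⟫) t := by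
    intro t
    exact (f_line_hasDerivAt hf x v t).sub
      (((hasDerivAt_id t).mul_const ⟪gradient f x, v⟫).congr_deriv (one_mul _))
  have hB' : ∀ t : ℝ, HasDerivAt B (L * ‖v‖ ^ 2 * t) t := by
    intro t
    have h : HasDerivAt (fun t : ℝ => t ^ 2) (2 * t) t := by simpa using hasDerivAt_pow 2 t
    exact ((h.const_mul (L * ‖v‖ ^ 2 / 2)).const_add (f x)).congr_deriv (by ring)
  have key : ∀ t ∈ Icc (0:ℝ) 1, F t ≤ B t := by
    apply image_le_of_deriv_right_le_deriv_boundary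
      (fun t _ => (hF' t).continuousAt.continuousWithinAt)
      (fun t _ => (hF' t).hasDerivWithinAt)
      (by simp [hF, hB])
      (fun t _ => (hB' t).continuousAt.continuousWithinAt)
      (fun t _ => (hB' t).hasDerivWithinAt)
    intro t ht
    have h1 : ⟪gradient f (x + t • v) - gradient f x, v⟫ ≤
        ‖gradient f (x + t • v) - gradient f x‖ * ‖v‖ := real_inner_le_norm _ _
    have h2 : ‖gradient f (x + t • v) - gradient f x‖ ≤ L * (t * ‖v‖) := by
      have := hgLip (x + t • v) x
      simpa [norm_smul, abs_of_nonneg ht.1] using this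
    calc ⟪gradient f (x + t • v), v⟫ - ⟪gradient f x, v⟫
        = ⟪gradient f (x + t • v) - gradient f x, v⟫ := by rw [inner_sub_left]
      _ ≤ L * ‖v‖ ^ 2 * t := h1.trans (by nlinarith [norm_nonneg v, norm_nonneg (gradient f (x + t • v) - gradient f x)])
  have := key 1 (by norm_num)
  simp only [hF, hB, one_smul, one_pow, one_mul] at this
  linarith

set_option maxHeartbeats 1000000 in
set_option synthInstance.maxHeartbeats 400000 in
lemma cubic_descent {f : E → ℝ} (hf : ContDiff ℝ 2 f)
    (H : E → E →L[ℝ] E) (hH : ∀ x, HasFDerivAt (gradient f) (H x) x)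
    {σ : ℝ} (hHLip : ∀ x y, ‖H x - H y‖ ≤ σ * ‖x - y‖) (x v : E) :
    f (x + v) ≤ f x + ⟪gradient f x, v⟫ + 1 / 2 * ⟪v, H x v⟫ + σ / 6 * ‖v‖ ^ 3 := by
  have stepA : ∀ t ∈ Icc (0:ℝ) 1,
      ‖gradient f (x + t • v) - gradient f x - t • (H x v)‖ ≤ σ * ‖v‖ ^ 2 / 2 * t ^ 2 := by
    set G : ℝ → E := fun t => gradient f (x + t • v) - gradient f x - t • (H x v) with hG
    have hG' : ∀ t : ℝ, HasDerivAt G (H (x + t • v) v - H x v) t := by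
      intro t
      refine ((g_line_hasDerivAt H hH x v t).sub_const (gradient f x)).sub ?_
      simpa using (hasDerivAt_id t).smul_const (H x v)
    have hB' : ∀ t : ℝ, HasDerivAt (fun t : ℝ => σ * ‖v‖ ^ 2 / 2 * t ^ 2) (σ * ‖v‖ ^ 2 * t) t := by
      intro t
      have h : HasDerivAt (fun t : ℝ => t ^ 2) (2 * t) t := by simpa using hasDerivAt_pow 2 t
      exact (h.const_mul (σ * ‖v‖ ^ 2 / 2)).congr_deriv (by ring)
    apply image_norm_le_of_norm_deriv_right_le_deriv_boundary
      (fun t _ => (hG' t).continuousAt.continuousWithinAt)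
      (fun t _ => (hG' t).hasDerivWithinAt)
      (by simp [hG]) hB'
    intro t ht
    have h2 : ‖H (x + t • v) - H x‖ ≤ σ * (t * ‖v‖) := by
      have := hHLip (x + t • v) x
      simpa [norm_smul, abs_of_nonneg ht.1] using this
    have h3 : ‖H (x + t • v) v - H x v‖ ≤ ‖H (x + t • v) - H x‖ * ‖v‖ := by
      rw [show H (x + t • v) v - H x v = (H (x + t • v) - H x) v from rfl]
      exact (H (x + t • v) - H x).le_opNorm v
    calc ‖H (x + t • v) v - H x v‖ ≤ ‖H (x + t • v) - H x‖ * ‖v‖ := h3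
      _ ≤ σ * ‖v‖ ^ 2 * t := by nlinarith [norm_nonneg v, norm_nonneg (H (x + t • v) - H x)]
  set F : ℝ → ℝ := fun t => f (x + t • v) - t * ⟪gradient f x, v⟫ - t ^ 2 / 2 * ⟪v, H x v⟫ with hF
  set B : ℝ → ℝ := fun t => f x + σ * ‖v‖ ^ 3 / 6 * t ^ 3 with hB
  have hF' : ∀ t : ℝ, HasDerivAt F
      (⟪gradient f (x + t • v), v⟫ - ⟪gradient f x, v⟫ - t * ⟪v, H x v⟫) t := by
    intro t
    have h1 : HasDerivAt (fun t : ℝ => t * ⟪gradient f x, v⟫) ⟪gradient f x, v⟫ t :=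
      ((hasDerivAt_id t).mul_const _).congr_deriv (one_mul _)
    have h2 : HasDerivAt (fun t : ℝ => t ^ 2 / 2 * ⟪v, H x v⟫) (t * ⟪v, H x v⟫) t := by
      have h : HasDerivAt (fun t : ℝ => t ^ 2) (2 * t) t := by simpa using hasDerivAt_pow 2 t
      exact ((h.div_const 2).mul_const _).congr_deriv (by ring)
    exact ((f_line_hasDerivAt hf x v t).sub h1).sub h2
  have hB' : ∀ t : ℝ, HasDerivAt B (σ * ‖v‖ ^ 3 / 2 * t ^ 2) t := by
    intro t
    have h : HasDerivAt (fun t : ℝ => t ^ 3) (3 * t ^ 2) t := by simpa using hasDerivAt_pow 3 t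
    exact ((h.const_mul (σ * ‖v‖ ^ 3 / 6)).const_add (f x)).congr_deriv (by ring)
  have key : ∀ t ∈ Icc (0:ℝ) 1, F t ≤ B t := by
    apply image_le_of_deriv_right_le_deriv_boundary
      (fun t _ => (hF' t).continuousAt.continuousWithinAt)
      (fun t _ => (hF' t).hasDerivWithinAt)
      (by simp [hF, hB])
      (fun t _ => (hB' t).continuousAt.continuousWithinAt)
      (fun t _ => (hB' t).hasDerivWithinAt)
    intro t ht
    have hA := stepA t ⟨ht.1, ht.2.le⟩
    have h1 : ⟪gradient f (x + t • v) - gradient f x - t • (H x v), v⟫ ≤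
        ‖gradient f (x + t • v) - gradient f x - t • (H x v)‖ * ‖v‖ := real_inner_le_norm _ _
    have heq : ⟪gradient f (x + t • v), v⟫ - ⟪gradient f x, v⟫ - t * ⟪v, H x v⟫
        = ⟪gradient f (x + t • v) - gradient f x - t • (H x v), v⟫ := by
      simp only [inner_sub_left, real_inner_smul_left, real_inner_comm (H x v) v]
      try ring
    rw [heq]
    have h4 : ‖gradient f (x + t • v) - gradient f x - t • (H x v)‖ * ‖v‖ ≤
        σ * ‖v‖ ^ 2 / 2 * t ^ 2 * ‖v‖ := mul_le_mul_of_nonneg_right hA (norm_nonneg v)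
    calc _ ≤ σ * ‖v‖ ^ 2 / 2 * t ^ 2 * ‖v‖ := h1.trans h4
      _ = σ * ‖v‖ ^ 3 / 2 * t ^ 2 := by ring
  have := key 1 (by norm_num)
  simp only [hF, hB, one_smul, one_pow, one_mul] at this
  linarith

end Aux

set_option maxHeartbeats 2000000 in
set_option synthInstance.maxHeartbeats 400000 in
/-- summability estimates for the two-step method. -/
theorem two_step_method_summability
    (n : ℕ) (hn : 1 ≤ n)
    (f : EuclideanSpace ℝ (Fin n) → ℝ) (hf : ContDiff ℝ 2 f)
    (f_inf : ℝ) (hfbdd : ∀ y, f_inf ≤ f y)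
    (H : EuclideanSpace ℝ (Fin n) → EuclideanSpace ℝ (Fin n) →L[ℝ] EuclideanSpace ℝ (Fin n))
    (hH : ∀ x, HasFDerivAt (gradient f) (H x) x)
    (hHsym : ∀ x u v, ⟪H x u, v⟫ = ⟪u, H x v⟫)
    (lam : EuclideanSpace ℝ (Fin n) → ℝ)
    (hlam : ∀ x, lam x =
      sInf {r : ℝ | ∃ u : EuclideanSpace ℝ (Fin n), ‖u‖ = 1 ∧ r = ⟪u, H x u⟫})
    (L : ℝ) (hL : 0 < L)
    (hgLip : ∀ x y, ‖gradient f x - gradient f y‖ ≤ L * ‖x - y‖)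
    (σ : ℝ) (hσ : 0 < σ)
    (hHLip : ∀ x y, ‖H x - H y‖ ≤ σ * ‖x - y‖)
    (γ δ ζ : ℝ) (hγ : γ ∈ Set.Ioc (0 : ℝ) 1) (hδ : δ ∈ Set.Ioc (0 : ℝ) 1)
    (hζ : ζ ∈ Set.Ioc (0 : ℝ) 1)
    (θ : ℝ) (hθ : 0 < θ) (η : ℝ) (hη : 1 ≤ η)
    (α : ℝ) (hα : α ∈ Set.Ioo (0 : ℝ) (2 * δ * ζ / (L * η ^ 2)))
    (β : ℝ) (hβ : β ∈ Set.Ioo (0 : ℝ) (3 * γ / (σ * θ)))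
    (x xhat d shat : ℕ → EuclideanSpace ℝ (Fin n))
    (hd0 : ∀ k, 0 ≤ lam (x k) → d k = 0)
    (hd : ∀ k, lam (x k) < 0 →
      ⟪d k, H (x k) (d k)⟫ ≤ γ * lam (x k) * ‖d k‖ ^ 2 ∧
      ⟪gradient f (x k), d k⟫ ≤ 0 ∧ ‖d k‖ = θ * |lam (x k)|)
    (hxhat : ∀ k, xhat k = x k + β • d k)
    (hs0 : ∀ k, gradient f (xhat k) = 0 → shat k = 0)
    (hs : ∀ k, gradient f (xhat k) ≠ 0 →
      -⟪gradient f (xhat k), shat k⟫ ≥ δ * ‖shat k‖ * ‖gradient f (xhat k)‖ ∧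
      ζ * ‖gradient f (xhat k)‖ ≤ ‖shat k‖ ∧ ‖shat k‖ ≤ η * ‖gradient f (xhat k)‖)
    (hxnext : ∀ k, x (k + 1) = xhat k + α • shat k) :
    Summable (fun k => |min 0 (lam (x k))| ^ 3) ∧
    Summable (fun k => ‖gradient f (xhat k)‖ ^ 2) := by
  obtain ⟨hα0, hα1⟩ := hα
  obtain ⟨hβ0, hβ1⟩ := hβ
  obtain ⟨hγ0, hγ1⟩ := hγ
  obtain ⟨hδ0, hδ1⟩ := hδ
  obtain ⟨hζ0, hζ1⟩ := hζ
  have hη0 : (0:ℝ) < η := lt_of_lt_of_le one_pos hη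
  set a : ℕ → ℝ := fun k => |min 0 (lam (x k))| ^ 3 with ha
  set b : ℕ → ℝ := fun k => ‖gradient f (xhat k)‖ ^ 2 with hb
  set c1 : ℝ := θ ^ 2 * β ^ 2 * (γ / 2 - σ * β * θ / 6) with hc1
  set c2 : ℝ := α * (δ * ζ - L * α * η ^ 2 / 2) with hc2
  have hβσθ : β * (σ * θ) < 3 * γ :=
    (lt_div_iff₀ (by positivity : (0:ℝ) < σ * θ)).mp hβ1
  have hc1pos : 0 < c1 := by
    have h : 0 < γ / 2 - σ * β * θ / 6 := by nlinarith
    rw [hc1]; positivity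
  have hαL : α * (L * η ^ 2) < 2 * δ * ζ :=
    (lt_div_iff₀ (by positivity : (0:ℝ) < L * η ^ 2)).mp hα1
  have hc2pos : 0 < c2 := by
    have h : 0 < δ * ζ - L * α * η ^ 2 / 2 := by nlinarith
    rw [hc2]; positivity
  clear_value a b c1 c2
  have hann : ∀ k, 0 ≤ a k := by
    intro k; simp only [ha]; positivity
  have hbnn : ∀ k, 0 ≤ b k := by
    intro k; simp only [hb]; positivity
  have claim1 : ∀ k, f (xhat k) ≤ f (x k) - c1 * a k := by
    intro k
    rcases le_or_gt 0 (lam (x k)) with hpos | hneg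
    · have hx : xhat k = x k := by rw [hxhat k, hd0 k hpos]; simp
      have hak : a k = 0 := by simp [ha, min_eq_left hpos]
      rw [hx, hak, mul_zero, sub_zero]
    · obtain ⟨hdH, hgd, hdn⟩ := hd k hneg
      set m : ℝ := -lam (x k) with hm
      have hm0 : 0 < m := by simp [hm]; linarith
      have hdn' : ‖d k‖ = θ * m := by rw [hdn, abs_of_neg hneg]
      clear_value m
      have hak : a k = m ^ 3 := by
        simp only [ha, min_eq_right hneg.le, abs_of_neg hneg]
        rw [hm]
      have hcub := cubic_descent hf H hH hHLip (x k) (β • d k)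
      rw [← hxhat k] at hcub
      have e1 : ⟪gradient f (x k), β • d k⟫ = β * ⟪gradient f (x k), d k⟫ :=
        real_inner_smul_right _ _ _
      have e2 : ⟪β • d k, H (x k) (β • d k)⟫ = β ^ 2 * ⟪d k, H (x k) (d k)⟫ := by
        rw [map_smul, real_inner_smul_left, real_inner_smul_right]; ring
      have e3 : ‖β • d k‖ = β * (θ * m) := by
        rw [norm_smul, Real.norm_eq_abs, abs_of_pos hβ0, hdn']
      rw [e1, e2, e3] at hcub
      have h5 : β ^ 2 * ⟪d k, H (x k) (d k)⟫ ≤ β ^ 2 * (γ * (-m) * (θ * m) ^ 2) := by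
        apply mul_le_mul_of_nonneg_left _ (sq_nonneg β)
        rw [← hdn']
        calc ⟪d k, H (x k) (d k)⟫ ≤ γ * lam (x k) * ‖d k‖ ^ 2 := hdH
          _ = γ * (-m) * ‖d k‖ ^ 2 := by rw [hm]; ring
      have h6 : β * ⟪gradient f (x k), d k⟫ ≤ 0 := mul_nonpos_of_nonneg_of_nonpos hβ0.le hgd
      have h7 : 1 / 2 * (β ^ 2 * (γ * (-m) * (θ * m) ^ 2)) + σ / 6 * (β * (θ * m)) ^ 3
          = -(c1 * m ^ 3) := by rw [hc1]; ring
      rw [hak]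
      have h8 : f (x k) + β * ⟪gradient f (x k), d k⟫ +
          1 / 2 * (β ^ 2 * ⟪d k, H (x k) (d k)⟫) + σ / 6 * (β * (θ * m)) ^ 3 ≤
          f (x k) + 1 / 2 * (β ^ 2 * (γ * (-m) * (θ * m) ^ 2)) + σ / 6 * (β * (θ * m)) ^ 3 := by
        linarith [h5, h6]
      have h9 : f (x k) + 1 / 2 * (β ^ 2 * (γ * (-m) * (θ * m) ^ 2)) + σ / 6 * (β * (θ * m)) ^ 3
          = f (x k) - c1 * m ^ 3 := by rw [hc1]; ring
      linarith [hcub, h8, h9]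
  have claim2 : ∀ k, f (x (k + 1)) ≤ f (xhat k) - c2 * b k := by
    intro k
    rcases eq_or_ne (gradient f (xhat k)) 0 with hg0 | hgne
    · have hx : x (k + 1) = xhat k := by rw [hxnext k, hs0 k hg0]; simp
      have hbk : b k = 0 := by simp [hb, hg0]
      rw [hx, hbk, mul_zero, sub_zero]
    · obtain ⟨h1, h2, h3⟩ := hs k hgne
      set G : ℝ := ‖gradient f (xhat k)‖ with hG
      have hG0 : 0 < G := norm_pos_iff.mpr hgne
      have hquad := quad_descent hf hgLip (xhat k) (α • shat k)
      rw [← hxnext k] at hquad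
      have e1 : ⟪gradient f (xhat k), α • shat k⟫ = α * ⟪gradient f (xhat k), shat k⟫ :=
        real_inner_smul_right _ _ _
      have e2 : ‖α • shat k‖ = α * ‖shat k‖ := by
        rw [norm_smul, Real.norm_eq_abs, abs_of_pos hα0]
      rw [e1, e2] at hquad
      have h4 : ⟪gradient f (xhat k), shat k⟫ ≤ -(δ * ζ * G ^ 2) := by
        have h5 : δ * ζ * G ^ 2 ≤ δ * ‖shat k‖ * G := by
          have := mul_le_mul_of_nonneg_left h2 (by positivity : (0:ℝ) ≤ δ * G)
          nlinarith [this]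
        linarith [neg_le_neg h1, h5]
      have h6 : ‖shat k‖ ^ 2 ≤ η ^ 2 * G ^ 2 := by nlinarith [norm_nonneg (shat k)]
      have hbk : b k = G ^ 2 := by simp only [hb, hG]
      rw [hbk]
      have h7 : α * ⟪gradient f (xhat k), shat k⟫ ≤ -(α * (δ * ζ * G ^ 2)) := by
        have := mul_le_mul_of_nonneg_left h4 hα0.le
        linarith
      have h8 : L / 2 * (α * ‖shat k‖) ^ 2 ≤ L / 2 * α ^ 2 * (η ^ 2 * G ^ 2) := by
        have := mul_le_mul_of_nonneg_left h6 (by positivity : (0:ℝ) ≤ L / 2 * α ^ 2)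
        nlinarith [this]
      have hc2' : c2 * G ^ 2 = α * (δ * ζ * G ^ 2) - L / 2 * α ^ 2 * (η ^ 2 * G ^ 2) := by
        rw [hc2]; ring
      linarith [hquad, h7, h8, hc2']
  have hstep : ∀ k, c1 * a k + c2 * b k ≤ f (x k) - f (x (k + 1)) := by
    intro k
    have := claim1 k
    have := claim2 k
    linarith
  have hsum : ∀ N, ∑ k ∈ Finset.range N, (c1 * a k + c2 * b k) ≤ f (x 0) - f_inf := by
    intro N
    calc ∑ k ∈ Finset.range N, (c1 * a k + c2 * b k)
        ≤ ∑ k ∈ Finset.range N, (f (x k) - f (x (k + 1))) :=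
          Finset.sum_le_sum fun k _ => hstep k
      _ = f (x 0) - f (x N) := Finset.sum_range_sub' (fun k => f (x k)) N
      _ ≤ f (x 0) - f_inf := by linarith [hfbdd (x N)]
  have hnn : ∀ k, 0 ≤ c1 * a k + c2 * b k := fun k => by
    have := hann k; have := hbnn k; nlinarith
  have S : Summable fun k => c1 * a k + c2 * b k :=
    summable_of_sum_range_le hnn hsum
  constructor
  · refine Summable.of_nonneg_of_le hann (fun k => ?_) (S.mul_left c1⁻¹)
    have h := hbnn k
    have : a k ≤ c1⁻¹ * (c1 * a k + c2 * b k) := by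
      rw [mul_add, ← mul_assoc, inv_mul_cancel₀ hc1pos.ne', one_mul]
      have := mul_nonneg (mul_nonneg (inv_nonneg.mpr hc1pos.le) hc2pos.le) (hbnn k)
      nlinarith [this]
    exact this
  · refine Summable.of_nonneg_of_le hbnn (fun k => ?_) (S.mul_left c2⁻¹)
    have : b k ≤ c2⁻¹ * (c1 * a k + c2 * b k) := by
      have e : c2⁻¹ * (c1 * a k + c2 * b k) = c2⁻¹ * (c1 * a k) + b k := by
        field_simp
      rw [e]
      have := mul_nonneg (inv_nonneg.mpr hc2pos.le) (mul_nonneg hc1pos.le (hann k))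
      linarith [this]
    exact this
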